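/- Let F : Fin n₁ × Fin n₂ × Fin n₃ × Fin n₄ → ℝ be a real fourth-order tensor with n₁ ≤ n₂ ≤ n₃ ≤ n₄. If F admits a complex CP decomposition with r terms, then F admits a real CP decomposition with at most n₁·n₃·r terms. In particular, rank_CP(F) ≤ rank_CP^ℝ(F) ≤ n₁·n₃·rank_CP(F), where rank_CP is the CP-rank over ℂ and rank_CP^ℝ is the CP-rank over ℝ. -/

import Mathlib

open Finset Module Submodule

/-- coercion map ℝ^n → ℂ^n as an ℝ-linear map -/
noncomputable def coeL (n : ℕ) : (Fin n → ℝ) →ₗ[ℝ] (Fin n → ℂ) where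
  toFun v := fun j => (v j : ℂ)
  map_add' u v := by funext j; simp
  map_smul' t v := by funext j; simp [Complex.real_smul]

/-- A real matrix with a complex rank-`r` decomposition has a real one. -/
lemma real_decomp {n₂ n₄ r : ℕ} (G : Fin n₂ → Fin n₄ → ℝ)
    (x : Fin r → Fin n₂ → ℂ) (y : Fin r → Fin n₄ → ℂ)
    (h : ∀ i j, (G i j : ℂ) = ∑ p, x p i * y p j) :
    ∃ (u : Fin r → Fin n₂ → ℝ) (v : Fin r → Fin n₄ → ℝ),
      ∀ i j, G i j = ∑ p, u p i * v p j := by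
  classical
  set L := coeL n₄
  set W : Submodule ℂ (Fin n₄ → ℂ) := Submodule.span ℂ (Set.range y) with hW
  set V : Submodule ℝ (Fin n₄ → ℝ) := (W.restrictScalars ℝ).comap L with hV
  -- rows of G lie in V
  have hrow : ∀ i, G i ∈ V := by
    intro i
    simp only [hV, Submodule.mem_comap, Submodule.restrictScalars_mem]
    have : L (G i) = ∑ p, x p i • y p := by
      funext j
      simp only [L, coeL, LinearMap.coe_mk, AddHom.coe_mk, Finset.sum_apply,
        Pi.smul_apply, smul_eq_mul]
      exact h i j
    rw [this]
    exact Submodule.sum_mem _ fun p _ =>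
      Submodule.smul_mem _ _ (Submodule.subset_span (Set.mem_range_self p))
  -- finrank bound
  set d := finrank ℝ V with hd
  let bV : Basis (Fin d) ℝ V := Module.finBasis ℝ V
  have hindep : LinearIndependent ℂ (fun q => L ((bV q : Fin n₄ → ℝ))) := by
    rw [Fintype.linearIndependent_iff]
    intro g hg q
    have hcomp : ∀ j, (∑ q, g q * ((bV q : Fin n₄ → ℝ) j : ℂ)) = 0 := by
      intro j
      have := congrFun hg j
      simpa [L, coeL, Finset.sum_apply] using this
    have hre : ∑ q, (g q).re • bV q = (0 : V) := by
      apply Subtype.ext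
      have : ∀ j, (∑ q, (g q).re * (bV q : Fin n₄ → ℝ) j) = 0 := by
        intro j
        have := congrArg Complex.re (hcomp j)
        simpa [Complex.mul_re] using this
      funext j
      simpa [Submodule.coe_sum, Finset.sum_apply] using this j
    have him : ∑ q, (g q).im • bV q = (0 : V) := by
      apply Subtype.ext
      have : ∀ j, (∑ q, (g q).im * (bV q : Fin n₄ → ℝ) j) = 0 := by
        intro j
        have := congrArg Complex.im (hcomp j)
        simpa [Complex.mul_im] using this
      funext j
      simpa [Submodule.coe_sum, Finset.sum_apply] using this j
    have h1 := (Fintype.linearIndependent_iff.mp bV.linearIndependent) _ hre q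
    have h2 := (Fintype.linearIndependent_iff.mp bV.linearIndependent) _ him q
    exact Complex.ext h1 h2
  have hdr : d ≤ r := by
    have hsub : Submodule.span ℂ (Set.range fun q => L ((bV q : Fin n₄ → ℝ))) ≤ W := by
      rw [Submodule.span_le]
      rintro _ ⟨q, rfl⟩
      exact (bV q).2
    calc d = finrank ℂ (Submodule.span ℂ (Set.range fun q => L ((bV q : Fin n₄ → ℝ)))) := by
            rw [finrank_span_eq_card hindep]; simp
      _ ≤ finrank ℂ W := Submodule.finrank_mono hsub
      _ ≤ r := by
            have := finrank_range_le_card (R := ℂ) y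
            simpa [Set.finrank, hW] using this
  -- build the decomposition
  refine ⟨fun p i => if hp : (p : ℕ) < d then bV.repr ⟨G i, hrow i⟩ ⟨p, hp⟩ else 0,
    fun p j => if hp : (p : ℕ) < d then (bV ⟨p, hp⟩ : Fin n₄ → ℝ) j else 0, ?_⟩
  intro i j
  have hrepr : G i j = ∑ q, bV.repr ⟨G i, hrow i⟩ q * (bV q : Fin n₄ → ℝ) j := by
    have := bV.sum_repr ⟨G i, hrow i⟩
    have := congrArg (fun m : V => (m : Fin n₄ → ℝ) j) this
    simp only [Submodule.coe_sum, Finset.sum_apply, Submodule.coe_smul, SetLike.val_smul,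
      Pi.smul_apply, smul_eq_mul] at this
    exact this.symm
  rw [hrepr]
  have key : ∀ p : Fin r,
      (if hp : (p : ℕ) < d then bV.repr ⟨G i, hrow i⟩ ⟨p, hp⟩ else 0) *
      (if hp : (p : ℕ) < d then (bV ⟨p, hp⟩ : Fin n₄ → ℝ) j else 0) =
      (fun k : ℕ => if hp : k < d then
        bV.repr ⟨G i, hrow i⟩ ⟨k, hp⟩ * (bV ⟨k, hp⟩ : Fin n₄ → ℝ) j else 0) p := by
    intro p
    by_cases hp : (p : ℕ) < d <;> simp [hp]
  rw [Finset.sum_congr rfl fun p _ => key p]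
  have step : ∑ p : Fin r, (fun k : ℕ => if hp : k < d then
      bV.repr ⟨G i, hrow i⟩ ⟨k, hp⟩ * (bV ⟨k, hp⟩ : Fin n₄ → ℝ) j else 0) (p : ℕ)
      = ∑ q : Fin d, bV.repr ⟨G i, hrow i⟩ q * (bV q : Fin n₄ → ℝ) j := by
    rw [Fin.sum_univ_eq_sum_range (fun k : ℕ => if hp : k < d then
      bV.repr ⟨G i, hrow i⟩ ⟨k, hp⟩ * (bV ⟨k, hp⟩ : Fin n₄ → ℝ) j else 0) r]
    rw [← Finset.sum_subset (Finset.range_subset_range.mpr hdr)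
      (fun k _ hk => by rw [dif_neg (by simpa using hk)])]
    rw [← Fin.sum_univ_eq_sum_range (fun k : ℕ => if hp : k < d then
      bV.repr ⟨G i, hrow i⟩ ⟨k, hp⟩ * (bV ⟨k, hp⟩ : Fin n₄ → ℝ) j else 0) d]
    exact Finset.sum_congr rfl fun q _ => by simp
  rw [step]
lemma main_decomp {n₁ n₂ n₃ n₄ r : ℕ}
    (F : Fin n₁ × Fin n₂ × Fin n₃ × Fin n₄ → ℝ)
    (a : Fin r → Fin n₁ → ℂ) (b : Fin r → Fin n₂ → ℂ)
    (c : Fin r → Fin n₃ → ℂ) (e : Fin r → Fin n₄ → ℂ)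
    (hF : ∀ i₁ i₂ i₃ i₄, (F (i₁, i₂, i₃, i₄) : ℂ) =
      ∑ p, a p i₁ * b p i₂ * c p i₃ * e p i₄) :
    ∃ (a' : Fin (n₁ * n₃ * r) → Fin n₁ → ℝ) (b' : Fin (n₁ * n₃ * r) → Fin n₂ → ℝ)
      (c' : Fin (n₁ * n₃ * r) → Fin n₃ → ℝ) (e' : Fin (n₁ * n₃ * r) → Fin n₄ → ℝ),
      ∀ i₁ i₂ i₃ i₄, F (i₁, i₂, i₃, i₄) =
        ∑ p, a' p i₁ * b' p i₂ * c' p i₃ * e' p i₄ := by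
  classical
  have hslice : ∀ (j₁ : Fin n₁) (j₃ : Fin n₃),
      ∃ (u : Fin r → Fin n₂ → ℝ) (v : Fin r → Fin n₄ → ℝ),
        ∀ i₂ i₄, F (j₁, i₂, j₃, i₄) = ∑ p, u p i₂ * v p i₄ := by
    intro j₁ j₃
    apply real_decomp (fun i₂ i₄ => F (j₁, i₂, j₃, i₄))
      (fun p i₂ => a p j₁ * c p j₃ * b p i₂) e
    intro i j
    rw [hF]
    exact Finset.sum_congr rfl fun p _ => by ring
  choose u v huv using hslice
  have hcard : Fintype.card (Fin n₁ × Fin n₃ × Fin r) = n₁ * n₃ * r := by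
    simp [mul_assoc]
  let E : Fin n₁ × Fin n₃ × Fin r ≃ Fin (n₁ * n₃ * r) := Fintype.equivFinOfCardEq hcard
  refine ⟨fun P i₁ => if (E.symm P).1 = i₁ then 1 else 0,
    fun P i₂ => u (E.symm P).1 (E.symm P).2.1 (E.symm P).2.2 i₂,
    fun P i₃ => if (E.symm P).2.1 = i₃ then 1 else 0,
    fun P i₄ => v (E.symm P).1 (E.symm P).2.1 (E.symm P).2.2 i₄, ?_⟩
  intro i₁ i₂ i₃ i₄
  rw [← Equiv.sum_comp E]
  simp only [Equiv.symm_apply_apply]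
  rw [huv i₁ i₃ i₂ i₄]
  simp [Fintype.sum_prod_type, ite_mul, mul_ite, mul_zero, zero_mul,
    Finset.sum_ite_eq, Finset.sum_ite_eq', Finset.mul_sum, Finset.sum_mul]
/-- If a real fourth-order tensor `F` with `n₁ ≤ n₂ ≤ n₃ ≤ n₄` admits a complex CP
decomposition with `r` terms, then it admits a real CP decomposition with at most
`n₁·n₃·r` terms.  In particular `rank_CP(F) ≤ rank_CP^ℝ(F) ≤ n₁·n₃·rank_CP(F)`. -/
theorem stmt_18 {n₁ n₂ n₃ n₄ r : ℕ}
    (h12 : n₁ ≤ n₂) (h23 : n₂ ≤ n₃) (h34 : n₃ ≤ n₄)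
    (F : Fin n₁ × Fin n₂ × Fin n₃ × Fin n₄ → ℝ)
    (a : Fin r → Fin n₁ → ℂ) (b : Fin r → Fin n₂ → ℂ)
    (c : Fin r → Fin n₃ → ℂ) (e : Fin r → Fin n₄ → ℂ)
    (hF : ∀ i₁ i₂ i₃ i₄, (F (i₁, i₂, i₃, i₄) : ℂ) =
      ∑ p, a p i₁ * b p i₂ * c p i₃ * e p i₄) :
    (∃ R : ℕ, R ≤ n₁ * n₃ * r ∧
      ∃ (a' : Fin R → Fin n₁ → ℝ) (b' : Fin R → Fin n₂ → ℝ)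
        (c' : Fin R → Fin n₃ → ℝ) (e' : Fin R → Fin n₄ → ℝ),
        ∀ i₁ i₂ i₃ i₄, F (i₁, i₂, i₃, i₄) =
          ∑ p, a' p i₁ * b' p i₂ * c' p i₃ * e' p i₄) ∧
    sInf {s : ℕ | ∃ (a' : Fin s → Fin n₁ → ℂ) (b' : Fin s → Fin n₂ → ℂ)
          (c' : Fin s → Fin n₃ → ℂ) (e' : Fin s → Fin n₄ → ℂ),
        ∀ i₁ i₂ i₃ i₄, (F (i₁, i₂, i₃, i₄) : ℂ) =
          ∑ p, a' p i₁ * b' p i₂ * c' p i₃ * e' p i₄}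
      ≤ sInf {s : ℕ | ∃ (a' : Fin s → Fin n₁ → ℝ) (b' : Fin s → Fin n₂ → ℝ)
          (c' : Fin s → Fin n₃ → ℝ) (e' : Fin s → Fin n₄ → ℝ),
        ∀ i₁ i₂ i₃ i₄, F (i₁, i₂, i₃, i₄) =
          ∑ p, a' p i₁ * b' p i₂ * c' p i₃ * e' p i₄} ∧
    sInf {s : ℕ | ∃ (a' : Fin s → Fin n₁ → ℝ) (b' : Fin s → Fin n₂ → ℝ)
          (c' : Fin s → Fin n₃ → ℝ) (e' : Fin s → Fin n₄ → ℝ),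
        ∀ i₁ i₂ i₃ i₄, F (i₁, i₂, i₃, i₄) =
          ∑ p, a' p i₁ * b' p i₂ * c' p i₃ * e' p i₄}
      ≤ n₁ * n₃ * sInf {s : ℕ | ∃ (a' : Fin s → Fin n₁ → ℂ) (b' : Fin s → Fin n₂ → ℂ)
          (c' : Fin s → Fin n₃ → ℂ) (e' : Fin s → Fin n₄ → ℂ),
        ∀ i₁ i₂ i₃ i₄, (F (i₁, i₂, i₃, i₄) : ℂ) =
          ∑ p, a' p i₁ * b' p i₂ * c' p i₃ * e' p i₄} := by
  classical
  set Sc := {s : ℕ | ∃ (a' : Fin s → Fin n₁ → ℂ) (b' : Fin s → Fin n₂ → ℂ)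
          (c' : Fin s → Fin n₃ → ℂ) (e' : Fin s → Fin n₄ → ℂ),
        ∀ i₁ i₂ i₃ i₄, (F (i₁, i₂, i₃, i₄) : ℂ) =
          ∑ p, a' p i₁ * b' p i₂ * c' p i₃ * e' p i₄} with hSc
  set Sr := {s : ℕ | ∃ (a' : Fin s → Fin n₁ → ℝ) (b' : Fin s → Fin n₂ → ℝ)
          (c' : Fin s → Fin n₃ → ℝ) (e' : Fin s → Fin n₄ → ℝ),
        ∀ i₁ i₂ i₃ i₄, F (i₁, i₂, i₃, i₄) =
          ∑ p, a' p i₁ * b' p i₂ * c' p i₃ * e' p i₄} with hSr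
  have hr : r ∈ Sc := ⟨a, b, c, e, hF⟩
  have hmain : ∀ s, s ∈ Sc → n₁ * n₃ * s ∈ Sr := by
    rintro s ⟨a', b', c', e', h'⟩
    obtain ⟨a'', b'', c'', e'', h''⟩ := main_decomp F a' b' c' e' h'
    exact ⟨a'', b'', c'', e'', h''⟩
  have hRr : n₁ * n₃ * r ∈ Sr := hmain r hr
  obtain ⟨a0, b0, c0, e0, h0⟩ := hRr
  refine ⟨⟨n₁ * n₃ * r, le_refl _, a0, b0, c0, e0, h0⟩, ?_, ?_⟩
  · have hne : Sr.Nonempty := ⟨n₁ * n₃ * r, a0, b0, c0, e0, h0⟩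
    obtain ⟨a', b', c', e', h'⟩ := Nat.sInf_mem hne
    apply Nat.sInf_le
    refine ⟨fun p i => (a' p i : ℂ), fun p i => (b' p i : ℂ),
      fun p i => (c' p i : ℂ), fun p i => (e' p i : ℂ), ?_⟩
    intro i₁ i₂ i₃ i₄
    rw [h' i₁ i₂ i₃ i₄]
    push_cast
    rfl
  · have hne : Sc.Nonempty := ⟨r, hr⟩
    exact Nat.sInf_le (hmain _ (Nat.sInf_mem hne))
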